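/- The set of weighted-sum-attainable solutions is contained in the set of augmented-Chebyshev-attainable solutions for finite 𝒯 with strictly positive objectives: if T* is the unique minimizer of Σ_i w_i f_i over 𝒯 for some w with w_i > 0, then there exist weights w' with w'_i > 0 and ρ > 0 such that T* minimizes max_i w'_i f_i(T) + ρ Σ_i f_i(T). -/
import Mathlib


/-- Every solution attainable as the unique minimizer of a weighted sum with
positive weights is also attainable by the augmented Chebyshev scalarization. -/
theorem weighted_sum_attainable_subset_chebyshev_attainable
    {𝒯 : Type*} [Nonempty 𝒯] [Fintype 𝒯] (n : ℕ)
    (f : Fin (n + 1) → 𝒯 → ℝ) (hf : ∀ i T, 0 < f i T)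
    (w : Fin (n + 1) → ℝ) (hw : ∀ i, 0 < w i)
    (Tstar : 𝒯)
    (hmin : ∀ T : 𝒯, T ≠ Tstar →
      ∑ i, w i * f i Tstar < ∑ i, w i * f i T) :
    ∃ (w' : Fin (n + 1) → ℝ) (ρ : ℝ), (∀ i, 0 < w' i) ∧ 0 < ρ ∧
      ∀ T : 𝒯,
        (Finset.univ.sup' Finset.univ_nonempty fun i => w' i * f i Tstar)
          + ρ * ∑ i, f i Tstar ≤
        (Finset.univ.sup' Finset.univ_nonempty fun i => w' i * f i T)
          + ρ * ∑ i, f i T := by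
  classical
  set w' : Fin (n + 1) → ℝ := fun i => (f i Tstar)⁻¹ with hw'
  have hw'pos : ∀ i, 0 < w' i := fun i => inv_pos.mpr (hf i Tstar)
  have hC : (0:ℝ) < ∑ i, f i Tstar :=
    Finset.sum_pos (fun i _ => hf i Tstar) Finset.univ_nonempty
  -- maxterm at Tstar equals 1
  have hstar : (Finset.univ.sup' Finset.univ_nonempty fun i => w' i * f i Tstar) = 1 := by
    have : (fun i : Fin (n+1) => w' i * f i Tstar) = fun _ => (1:ℝ) := by
      funext i
      exact inv_mul_cancel₀ (ne_of_gt (hf i Tstar))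
    rw [this, Finset.sup'_const]
  -- Pareto optimality
  have pareto : ∀ T : 𝒯, T ≠ Tstar → ∃ i, f i Tstar < f i T := by
    intro T hT
    by_contra h
    push_neg at h
    have := hmin T hT
    have hle : ∑ i, w i * f i T ≤ ∑ i, w i * f i Tstar :=
      Finset.sum_le_sum (fun i _ => mul_le_mul_of_nonneg_left (h i) (hw i).le)
    linarith
  set s : Finset 𝒯 := Finset.univ.filter (fun T => T ≠ Tstar) with hs
  by_cases hne : s.Nonempty
  · set δ : ℝ := s.inf' hne
      (fun T => (Finset.univ.sup' Finset.univ_nonempty fun i => w' i * f i T) - 1) with hδ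
    have hδpos : 0 < δ := by
      rw [hδ, Finset.lt_inf'_iff]
      intro T hT
      obtain ⟨i, hi⟩ := pareto T (by simpa [hs] using hT)
      have h1 : (1:ℝ) < w' i * f i T := by
        have := inv_mul_cancel₀ (ne_of_gt (hf i Tstar))
        have h2 : (f i Tstar)⁻¹ * f i Tstar < (f i Tstar)⁻¹ * f i T :=
          mul_lt_mul_of_pos_left hi (inv_pos.mpr (hf i Tstar))
        simpa [hw', this] using h2
      have hle : w' i * f i T ≤
          Finset.univ.sup' Finset.univ_nonempty fun i => w' i * f i T :=
        Finset.le_sup' (fun i => w' i * f i T) (Finset.mem_univ i)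
      linarith
    refine ⟨w', δ / (∑ i, f i Tstar), hw'pos, div_pos hδpos hC, ?_⟩
    intro T
    by_cases hT : T = Tstar
    · subst hT; exact le_refl _
    · have hδle : δ ≤
          (Finset.univ.sup' Finset.univ_nonempty fun i => w' i * f i T) - 1 :=
        Finset.inf'_le _ (by simp [hs, hT])
      have hρC : δ / (∑ i, f i Tstar) * (∑ i, f i Tstar) = δ :=
        div_mul_cancel₀ _ (ne_of_gt hC)
      have hρT : 0 ≤ δ / (∑ i, f i Tstar) * (∑ i, f i T) := by
        have : (0:ℝ) < ∑ i, f i T :=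
          Finset.sum_pos (fun i _ => hf i T) Finset.univ_nonempty
        positivity
      rw [hstar]
      linarith
  · refine ⟨w', 1, hw'pos, one_pos, ?_⟩
    intro T
    have hT : T = Tstar := by
      by_contra h
      exact hne ⟨T, by simp [hs, h]⟩
    subst hT; exact le_refl _
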